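/- In ℚ[[t,z]] one has the identity exp(−Σ_{n≥1} ((1 − t^n)/(1 + t^n))·z^n/n) = (1 − z)·Π_{j≥1} (1 − t^{2j}z)²·(1 − t^{2j-1}z)^{-2}, where (1 − t^n)/(1 + t^n) is expanded as a power series in t. -/

import Mathlib

open Finset

noncomputable section

/-- `ℚ[[t]]`. -/
abbrev Rt : Type := PowerSeries ℚ

/-- The variable `t` of `ℚ[[t]]`. -/
def tVar : Rt := PowerSeries.X

/-- The image of `t` in `ℚ[[t]][[z]]`. -/
def tC : PowerSeries Rt := PowerSeries.C tVar

/-- The exponential `exp(f) = ∑_{n≥0} f^n/n!` of `f ∈ ℚ[[t]][[z]]` with zero constant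
term; the coefficient of `z^m` only involves `f^n` for `n ≤ m`. -/
def expOf (f : PowerSeries Rt) : PowerSeries Rt :=
  PowerSeries.mk fun m =>
    PowerSeries.coeff m (∑ n ∈ range (m + 1), ((n.factorial : ℚ))⁻¹ • f ^ n)

/-- The series `−∑_{n≥1} ((1 − t^n)/(1 + t^n)) z^n/n ∈ ℚ[[t]][[z]]`, where
`(1 − t^n)/(1 + t^n)` is expanded as a power series in `t` (note `1 + t^n` is a
unit of `ℚ[[t]]`, so `Ring.inverse` is its genuine inverse). -/
def bosonicExponent : PowerSeries Rt :=
  PowerSeries.mk fun n =>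
    if n = 0 then 0
    else -(n : ℚ)⁻¹ • ((1 - tVar ^ n) * Ring.inverse (1 + tVar ^ n))

open PowerSeries

namespace Aux
variable {A : Type*} [CommRing A]

/-- geometric series `∑ a^m z^m`. -/
def geo (a : A) : A⟦X⟧ := PowerSeries.mk fun m => a ^ m

lemma one_sub_mul_geo (a : A) : (1 - C a * X) * geo a = 1 := by
  ext n
  rw [sub_mul, one_mul, map_sub, mul_assoc]
  cases n with
  | zero => simp [geo, coeff_zero_eq_constantCoeff]
  | succ n =>
    rw [coeff_C_mul, coeff_succ_X_mul]
    simp [geo, pow_succ, mul_comm, coeff_one]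

/-- logarithmic derivative of `1 - a z`. -/
def ell (a : A) : A⟦X⟧ := -(C a * geo a)

lemma coeff_ell (a : A) (m : ℕ) : coeff m (ell a) = -(a ^ (m+1)) := by
  simp [ell, geo, pow_succ, mul_comm]

lemma deriv_one_sub (a : A) :
    d⁄dX A (1 - C a * X) = ell a * (1 - C a * X) := by
  have h : d⁄dX A (1 - C a * X) = -(C a) := by
    rw [map_sub, Derivation.leibniz, derivative_X, derivative_C]
    simp [smul_eq_mul]
  rw [h, ell]
  have := one_sub_mul_geo a
  calc -(C a) = -(C a) * ((1 - C a * X) * geo a) := by rw [this, mul_one]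
    _ = -(C a * geo a) * (1 - C a * X) := by ring

lemma deriv_mul_logd {F G LF LG : A⟦X⟧} (hF : d⁄dX A F = LF * F)
    (hG : d⁄dX A G = LG * G) : d⁄dX A (F * G) = (LF + LG) * (F * G) := by
  rw [Derivation.leibniz, smul_eq_mul, smul_eq_mul, hF, hG]; ring

lemma deriv_sq_logd {F L : A⟦X⟧} (hF : d⁄dX A F = L * F) :
    d⁄dX A (F ^ 2) = (2 * L) * F ^ 2 := by
  rw [pow_two, deriv_mul_logd hF hF]; ring

lemma deriv_prod_logd {ι : Type*} (s : Finset ι) (F L : ι → A⟦X⟧)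
    (h : ∀ j ∈ s, d⁄dX A (F j) = L j * F j) :
    d⁄dX A (∏ j ∈ s, F j) = (∑ j ∈ s, L j) * ∏ j ∈ s, F j := by
  induction s using Finset.cons_induction with
  | empty => simp
  | cons j s hj ih =>
    rw [Finset.prod_cons, Finset.sum_cons,
      deriv_mul_logd (h j (Finset.mem_cons_self j s))
        (ih fun i hi => h i (Finset.mem_cons_of_mem hi))]

end Aux

namespace Aux2
open Aux
variable {A : Type*} [CommRing A]

def Qp (u : A) (K : ℕ) : A⟦X⟧ := ∏ j ∈ Icc 1 K, (1 - C (u ^ (2*j-1)) * X) ^ 2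
def Rp (u : A) (K : ℕ) : A⟦X⟧ :=
  (1 - X) * ∏ j ∈ Icc 1 K, (1 - C (u ^ (2*j)) * X) ^ 2
def LQ (u : A) (K : ℕ) : A⟦X⟧ := ∑ j ∈ Icc 1 K, 2 * ell (u ^ (2*j-1))
def LR (u : A) (K : ℕ) : A⟦X⟧ := ell 1 + ∑ j ∈ Icc 1 K, 2 * ell (u ^ (2*j))
/-- truncated log-derivative of the exponent -/
def WK (u : A) (K : ℕ) : A⟦X⟧ :=
  PowerSeries.mk fun m =>
    -1 + ∑ j ∈ Icc 1 K, (2 * u ^ ((2*j-1)*(m+1)) - 2 * u ^ ((2*j)*(m+1)))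

lemma deriv_Qp (u : A) (K : ℕ) : d⁄dX A (Qp u K) = LQ u K * Qp u K :=
  deriv_prod_logd _ _ _ fun j _ => deriv_sq_logd (deriv_one_sub _)

lemma deriv_Rp (u : A) (K : ℕ) : d⁄dX A (Rp u K) = LR u K * Rp u K := by
  have h1 : d⁄dX A (1 - X : A⟦X⟧) = ell 1 * (1 - X) := by
    have := deriv_one_sub (1 : A)
    simpa using this
  exact deriv_mul_logd h1
    (deriv_prod_logd _ _ _ fun j _ => deriv_sq_logd (deriv_one_sub _))

lemma WK_eq (u : A) (K : ℕ) : WK u K = LR u K - LQ u K := by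
  ext m
  simp only [WK, coeff_mk, LR, LQ, map_sub, map_add, map_sum, coeff_ell, map_mul]
  have hc : ∀ a : A, coeff m (2 * ell a) = 2 * (-(a ^ (m+1))) := by
    intro a
    have : (2 : A⟦X⟧) * ell a = (2 : A) • ell a := by
      rw [smul_eq_C_mul, map_ofNat]
    rw [this, map_smul, coeff_ell, smul_eq_mul]
  simp only [hc, one_pow]
  rw [add_sub_assoc, ← Finset.sum_sub_distrib]
  congr 1
  exact Finset.sum_congr rfl fun j _ => by ring

end Aux2

namespace Aux2
variable {A : Type*} [CommRing A]

lemma telescope (u : A) (n K : ℕ) :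
    (1 + u^n) * (-1 + ∑ j ∈ Icc 1 K, (2*u^((2*j-1)*(n)) - 2*u^((2*j)*(n)))) =
      -1 + u^n - 2*u^((2*K+1)*(n)) := by
  induction K with
  | zero => simp; ring
  | succ K ih =>
    rw [Finset.sum_Icc_succ_top (by omega : 1 ≤ K + 1)]
    have e1 : 2*(K+1)-1 = 2*K+1 := by omega
    rw [e1]
    have e2 : 2*(K+1) = 2*K+2 := by omega
    rw [e2]
    linear_combination ih

end Aux2

namespace AuxExp
variable {A : Type*} [CommRing A] [Algebra ℚ A]

def expT (f : A⟦X⟧) (D : ℕ) : A⟦X⟧ :=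
  ∑ n ∈ range (D + 1), ((n.factorial : ℚ))⁻¹ • f ^ n

def mkExp (f : A⟦X⟧) : A⟦X⟧ := PowerSeries.mk fun m => coeff m (expT f m)

lemma coeff_pow_zero {f : A⟦X⟧} (hf : constantCoeff f = 0) {d n : ℕ} (h : d < n) :
    coeff d (f ^ n) = 0 := by
  have hx : (X : A⟦X⟧) ^ n ∣ f ^ n := pow_dvd_pow_of_dvd (X_dvd_iff.mpr hf) n
  exact X_pow_dvd_iff.mp hx d h

lemma coeff_mkExp {f : A⟦X⟧} (hf : constantCoeff f = 0) {d D : ℕ} (h : d ≤ D) :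
    coeff d (mkExp f) = coeff d (expT f D) := by
  have key : ∀ E, d ≤ E → coeff d (expT f E) =
      ∑ n ∈ range (d + 1), ((n.factorial : ℚ))⁻¹ • coeff d (f ^ n) := by
    intro E hE
    rw [expT, map_sum]
    simp only [coeff_smul]
    refine (Finset.sum_subset (by intro x hx; simp at hx ⊢; omega) ?_).symm
    intro n _ hn
    simp only [Finset.mem_range, not_lt] at hn
    rw [coeff_pow_zero hf (by omega), smul_zero]
  rw [mkExp, coeff_mk, key d le_rfl, key D h]

lemma deriv_expT (f : A⟦X⟧) (D : ℕ) :
    d⁄dX A (expT f (D + 1)) = d⁄dX A f * expT f D := by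
  have term : ∀ n : ℕ, d⁄dX A ((((n+1).factorial : ℚ))⁻¹ • f ^ (n+1)) =
      d⁄dX A f * ((n.factorial : ℚ)⁻¹ • f ^ n) := by
    intro n
    have dsmul : ∀ (q : ℚ) (g : A⟦X⟧), d⁄dX A (q • g) = q • d⁄dX A g := by
      intro q g; ext k
      rw [coeff_derivative, coeff_smul, coeff_smul, coeff_derivative, smul_mul_assoc]
    rw [dsmul, Derivation.leibniz_pow, Nat.add_sub_cancel,
      smul_eq_mul, ← Nat.cast_smul_eq_nsmul ℚ, smul_smul, mul_smul_comm]
    congr 1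
    · rw [Nat.factorial_succ]
      push_cast
      rw [mul_inv]
      field_simp
    · ring
  rw [expT, map_sum,
    Finset.sum_range_succ' (fun n => d⁄dX A (((n.factorial : ℚ))⁻¹ • f ^ n))]
  simp only [term]
  have h0 : d⁄dX A (((Nat.factorial 0 : ℚ))⁻¹ • f ^ 0) = 0 := by
    ext k
    rw [coeff_derivative, coeff_smul]
    simp
  rw [h0, add_zero, expT, Finset.mul_sum]

lemma deriv_mkExp {f : A⟦X⟧} (hf : constantCoeff f = 0) :
    d⁄dX A (mkExp f) = d⁄dX A f * mkExp f := by
  ext m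
  rw [coeff_derivative]
  have h1 : coeff (m+1) (mkExp f) = coeff (m+1) (expT f (m+1)) :=
    coeff_mkExp hf le_rfl
  rw [h1, ← coeff_derivative, deriv_expT]
  rw [coeff_mul, coeff_mul]
  refine Finset.sum_congr rfl fun p hp => ?_
  rw [HasAntidiagonal.mem_antidiagonal] at hp
  rw [coeff_mkExp hf (show p.2 ≤ m by omega)]

lemma constantCoeff_mkExp (f : A⟦X⟧) : constantCoeff (mkExp f) = 1 := by
  rw [← coeff_zero_eq_constantCoeff_apply, mkExp, coeff_mk, expT]
  simp

end AuxExp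

namespace Aux3
open Aux Aux2 AuxExp
variable {A B : Type*} [CommRing A] [CommRing B]

lemma constCoeff_one_sub (a : A) : constantCoeff (1 - C a * X) = 1 := by
  simp

lemma isUnit_one_sub (a : A) : IsUnit (1 - C a * X) := by
  rw [PowerSeries.isUnit_iff_constantCoeff, constCoeff_one_sub]
  exact isUnit_one

lemma constCoeff_Qp (u : A) (K : ℕ) : constantCoeff (Qp u K) = 1 := by
  rw [Qp, map_prod]
  refine Finset.prod_eq_one fun j _ => ?_
  rw [map_pow, constCoeff_one_sub, one_pow]

lemma constCoeff_Rp (u : A) (K : ℕ) : constantCoeff (Rp u K) = 1 := by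
  rw [Rp, map_mul, map_prod, map_sub, map_one, constantCoeff_X, sub_zero, one_mul]
  refine Finset.prod_eq_one fun j _ => ?_
  rw [map_pow, constCoeff_one_sub, one_pow]

lemma isUnit_Qp (u : A) (K : ℕ) : IsUnit (Qp u K) := by
  rw [PowerSeries.isUnit_iff_constantCoeff, constCoeff_Qp]; exact isUnit_one

lemma isUnit_Rp (u : A) (K : ℕ) : IsUnit (Rp u K) := by
  rw [PowerSeries.isUnit_iff_constantCoeff, constCoeff_Rp]; exact isUnit_one

lemma map_Qp (φ : A →+* B) (u : A) (K : ℕ) :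
    PowerSeries.map φ (Qp u K) = Qp (φ u) K := by
  rw [Qp, Qp, map_prod]
  refine Finset.prod_congr rfl fun j _ => ?_
  rw [map_pow, map_sub, map_one, map_mul, PowerSeries.map_C, PowerSeries.map_X, map_pow]

lemma map_Rp (φ : A →+* B) (u : A) (K : ℕ) :
    PowerSeries.map φ (Rp u K) = Rp (φ u) K := by
  rw [Rp, Rp, map_mul, map_sub, map_one, PowerSeries.map_X, map_prod]
  congr 1
  refine Finset.prod_congr rfl fun j _ => ?_
  rw [map_pow, map_sub, map_one, map_mul, PowerSeries.map_C, PowerSeries.map_X, map_pow]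

lemma deriv_map (φ : A →+* B) (f : A⟦X⟧) :
    d⁄dX B (PowerSeries.map φ f) = PowerSeries.map φ (d⁄dX A f) := by
  ext n
  rw [coeff_derivative, coeff_map, coeff_map, coeff_derivative, map_mul]
  congr 1
  rw [map_add, map_one, map_natCast]

lemma eq_one_of_deriv_zero {A : Type*} [CommRing A] [Algebra ℚ A] {F : A⟦X⟧}
    (h : d⁄dX A F = 0) (h0 : constantCoeff F = 1) : F = 1 := by
  ext n
  cases n with
  | zero => simp [coeff_zero_eq_constantCoeff, h0]
  | succ n =>
    have hu : IsUnit ((n : A) + 1) := by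
      have : ((n : A) + 1) = algebraMap ℚ A ((n : ℚ) + 1) := by push_cast; simp
      rw [this]
      exact (isUnit_iff_ne_zero.mpr (by positivity)).map _
    have hthis := congrArg (coeff n) h
    rw [coeff_derivative, map_zero] at hthis
    have hz : coeff (n+1) F = 0 :=
      hu.mul_right_cancel (by rw [hthis, zero_mul])
    rw [hz, coeff_one, if_neg (by omega)]

end Aux3

namespace Aux4
open Aux Aux2 AuxExp Aux3

lemma ode_unique {A : Type*} [CommRing A] [Algebra ℚ A] {F G : A⟦X⟧}
    (hFG : d⁄dX A F * G = F * d⁄dX A G) (hGu : IsUnit G)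
    (hF0 : constantCoeff F = 1) (hG0 : constantCoeff G = 1) : F = G := by
  set g := Ring.inverse G with hg
  have hGg : G * g = 1 := Ring.mul_inverse_cancel _ hGu
  have hgg : G * d⁄dX A g + g * d⁄dX A G = 0 := by
    have h2 := congrArg (d⁄dX A) hGg
    rwa [Derivation.leibniz, smul_eq_mul, smul_eq_mul, Derivation.map_one_eq_zero] at h2
  have hH : d⁄dX A (F * g) = 0 := by
    apply hGu.mul_left_cancel
    rw [mul_zero, Derivation.leibniz, smul_eq_mul, smul_eq_mul]
    linear_combination F * hgg + g * hFG
  have hg0 : constantCoeff g = 1 := by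
    have h3 := congrArg constantCoeff hGg
    rw [map_mul, hG0, one_mul, map_one] at h3
    exact h3
  have h1 : F * g = 1 := by
    refine eq_one_of_deriv_zero hH ?_
    rw [map_mul, hF0, hg0, one_mul]
  calc F = F * (g * G) := by rw [mul_comm g G, hGg, mul_one]
    _ = (F * g) * G := by ring
    _ = G := by rw [h1, one_mul]

end Aux4

namespace Main
open Aux Aux2 AuxExp Aux3 Aux4

lemma constB : PowerSeries.constantCoeff bosonicExponent = 0 := by
  rw [← coeff_zero_eq_constantCoeff_apply, bosonicExponent, coeff_mk, if_pos rfl]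

lemma coeff_deriv_B (m : ℕ) :
    PowerSeries.coeff m (d⁄dX Rt bosonicExponent) =
      -((1 - tVar ^ (m+1)) * Ring.inverse (1 + tVar ^ (m+1))) := by
  rw [coeff_derivative, bosonicExponent, coeff_mk, if_neg (Nat.succ_ne_zero m)]
  have hq : ((m : Rt) + 1) = PowerSeries.C ((m : ℚ) + 1) := by
    rw [map_add, map_natCast, map_one]
  rw [hq, neg_smul, smul_eq_C_mul]
  have hcast : ((m+1 : ℕ) : ℚ) = (m : ℚ) + 1 := by push_cast; ring
  rw [hcast]
  have : -(PowerSeries.C ((m:ℚ)+1)⁻¹ *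
        ((1 - tVar ^ (m+1)) * Ring.inverse (1 + tVar ^ (m+1)))) * PowerSeries.C ((m:ℚ)+1)
      = -((PowerSeries.C ((m:ℚ)+1)⁻¹ * PowerSeries.C ((m:ℚ)+1)) *
        ((1 - tVar ^ (m+1)) * Ring.inverse (1 + tVar ^ (m+1)))) := by ring
  rw [this, ← map_mul, inv_mul_cancel₀ (by positivity : ((m : ℚ) + 1) ≠ 0), map_one, one_mul]

lemma isUnit_one_add_pow (m : ℕ) : IsUnit ((1 : Rt) + tVar ^ (m+1)) := by
  rw [PowerSeries.isUnit_iff_constantCoeff, map_add, map_one, tVar, map_pow,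
    constantCoeff_X, zero_pow (Nat.succ_ne_zero m), add_zero]
  exact isUnit_one

lemma key_cong (K m : ℕ) :
    tVar ^ (2*K+1) ∣
      (PowerSeries.coeff m (d⁄dX Rt bosonicExponent) -
        PowerSeries.coeff m (WK tVar K)) := by
  set n := m + 1 with hn
  have hU := isUnit_one_add_pow m
  have hc : (1 + tVar ^ n) * Ring.inverse (1 + tVar ^ n) = 1 :=
    Ring.mul_inverse_cancel _ hU
  have ht := telescope tVar n K
  have hab : (1 + tVar^n) *
      (PowerSeries.coeff m (d⁄dX Rt bosonicExponent) -
        PowerSeries.coeff m (WK tVar K)) = 2 * tVar ^ ((2*K+1)*n) := by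
    rw [coeff_deriv_B, WK, coeff_mk, ← hn]
    linear_combination (-(1 - tVar^n)) * hc - ht
  have hsub : PowerSeries.coeff m (d⁄dX Rt bosonicExponent) -
      PowerSeries.coeff m (WK tVar K) =
      Ring.inverse (1 + tVar^n) * (2 * tVar ^ ((2*K+1)*n)) := by
    calc _ = Ring.inverse (1 + tVar^n) * ((1 + tVar^n) * _) := by
            rw [← mul_assoc, Ring.inverse_mul_cancel _ hU, one_mul]
      _ = _ := by rw [hab]
  refine ⟨Ring.inverse (1 + tVar^n) * 2 * tVar ^ ((2*K+1)*n - (2*K+1)), ?_⟩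
  rw [hsub]
  have hpow : tVar ^ ((2*K+1)*n) = tVar ^ (2*K+1) * tVar ^ ((2*K+1)*n - (2*K+1)) := by
    rw [← pow_add]
    congr 1
    have : 2*K+1 ≤ (2*K+1) * n := Nat.le_mul_of_pos_right (2*K+1) (by omega)
    omega
  rw [hpow]; ring

end Main

namespace Main2
open Aux Aux2 AuxExp Aux3 Aux4 Main

variable (K : ℕ)

def I (K : ℕ) : Ideal Rt := Ideal.span {tVar ^ (2*K+1)}
def pr (K : ℕ) : Rt →+* Rt ⧸ I K := Ideal.Quotient.mk (I K)

lemma PhiW (K : ℕ) :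
    PowerSeries.map (pr K) (d⁄dX Rt bosonicExponent) = WK (pr K tVar) K := by
  ext m
  rw [PowerSeries.coeff_map]
  have h1 : pr K (PowerSeries.coeff m (d⁄dX Rt bosonicExponent)) =
      pr K (PowerSeries.coeff m (WK tVar K)) := by
    rw [pr, Ideal.Quotient.mk_eq_mk_iff_sub_mem]
    exact Ideal.mem_span_singleton.mpr (key_cong K m)
  rw [h1, WK, WK, coeff_mk, coeff_mk]
  simp only [map_add, map_neg, map_one, map_sum, map_sub, map_mul, map_pow, map_ofNat]

lemma expOf_eq_mkExp (f : PowerSeries Rt) : expOf f = mkExp f := rfl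

lemma main_quotient (K : ℕ) :
    PowerSeries.map (pr K) (expOf bosonicExponent) * Qp (pr K tVar) K =
      Rp (pr K tVar) K := by
  set s := pr K tVar
  set E := PowerSeries.map (pr K) (expOf bosonicExponent) with hE
  have hE0 : PowerSeries.constantCoeff E = 1 := by
    rw [hE, ← coeff_zero_eq_constantCoeff_apply, PowerSeries.coeff_map,
      coeff_zero_eq_constantCoeff_apply, expOf_eq_mkExp, constantCoeff_mkExp, map_one]
  have hEd : d⁄dX (Rt ⧸ I K) E = PowerSeries.map (pr K) (d⁄dX Rt bosonicExponent) * E := by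
    rw [hE, deriv_map, expOf_eq_mkExp, deriv_mkExp constB, map_mul]
  have hF : d⁄dX (Rt ⧸ I K) (E * Qp s K) =
      (PowerSeries.map (pr K) (d⁄dX Rt bosonicExponent) + LQ s K) * (E * Qp s K) :=
    deriv_mul_logd hEd (deriv_Qp s K)
  have hW : PowerSeries.map (pr K) (d⁄dX Rt bosonicExponent) + LQ s K = LR s K := by
    rw [PhiW, WK_eq, sub_add_cancel]
  refine ode_unique ?_ (isUnit_Rp s K) ?_ (constCoeff_Rp s K)
  · rw [hF, hW, deriv_Rp]; ring
  · rw [map_mul, hE0, constCoeff_Qp, mul_one]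

end Main2

namespace Main3
open Aux Aux2 AuxExp Aux3 Aux4 Main Main2

lemma htC (k : ℕ) : (tC : PowerSeries Rt) ^ k = PowerSeries.C (tVar ^ k) := by
  rw [tC, ← map_pow]

lemma lhs_mul_Q (K : ℕ) :
    ((1 - PowerSeries.X) * ∏ j ∈ Icc 1 K,
        ((1 - tC ^ (2*j) * PowerSeries.X)^2 *
          Ring.inverse ((1 - tC^(2*j-1) * PowerSeries.X)^2))) * Qp tVar K
      = Rp tVar K := by
  simp_rw [htC]
  rw [Qp, Rp, mul_assoc, ← Finset.prod_mul_distrib]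
  have hfac : ∀ j : ℕ,
      ((1 - PowerSeries.C (tVar^(2*j)) * PowerSeries.X)^2 *
        Ring.inverse ((1 - PowerSeries.C (tVar^(2*j-1)) * PowerSeries.X)^2)) *
        ((1 - PowerSeries.C (tVar^(2*j-1)) * PowerSeries.X)^2)
      = (1 - PowerSeries.C (tVar^(2*j)) * PowerSeries.X)^2 := fun j => by
    rw [mul_assoc, Ring.inverse_mul_cancel _ ((isUnit_one_sub _).pow 2), mul_one]
  rw [Finset.prod_congr rfl fun j _ => hfac j]

end Main3


/-- `exp(−∑_{n≥1} ((1−t^n)/(1+t^n)) z^n/n) = (1−z)·∏_{j≥1} (1−t^{2j}z)²(1−t^{2j-1}z)^{-2}`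
in `ℚ[[t,z]]`: each factor is a unit, and the infinite product converges `t`-adically,
i.e. each coefficient of `t^m z^d` of `(1−z)` times the partial product over
`1 ≤ j ≤ K` with `m < 2K+1` equals the corresponding coefficient of the exponential. -/
theorem exp_bosonicExponent_product :
    (∀ j : ℕ, IsUnit ((1 - tC ^ (2 * j - 1) * (PowerSeries.X : PowerSeries Rt)) ^ 2)) ∧
    ∀ d m K : ℕ, m < 2 * K + 1 →
      PowerSeries.coeff m (PowerSeries.coeff d
        ((1 - PowerSeries.X) *
          ∏ j ∈ Icc 1 K,
            ((1 - tC ^ (2 * j) * PowerSeries.X) ^ 2 *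
              Ring.inverse ((1 - tC ^ (2 * j - 1) * PowerSeries.X) ^ 2)))) =
      PowerSeries.coeff m (PowerSeries.coeff d (expOf bosonicExponent)) := by
  constructor
  · intro j
    rw [Main3.htC]
    exact (Aux3.isUnit_one_sub _).pow 2
  · intro d m K hm
    set L := ((1 - PowerSeries.X) *
          ∏ j ∈ Icc 1 K,
            ((1 - tC ^ (2 * j) * PowerSeries.X) ^ 2 *
              Ring.inverse ((1 - tC ^ (2 * j - 1) * PowerSeries.X) ^ 2))) with hL
    have hmap : PowerSeries.map (Main2.pr K) L =
        PowerSeries.map (Main2.pr K) (expOf bosonicExponent) := by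
      refine (Aux3.isUnit_Qp (Main2.pr K tVar) K).mul_right_cancel ?_
      have h1 : PowerSeries.map (Main2.pr K) L * Aux2.Qp (Main2.pr K tVar) K =
          Aux2.Rp (Main2.pr K tVar) K := by
        rw [← Aux3.map_Qp (Main2.pr K) tVar K, ← map_mul, hL, Main3.lhs_mul_Q,
          Aux3.map_Rp]
      rw [h1, Main2.main_quotient]
    have hcd : Main2.pr K (PowerSeries.coeff d L) =
        Main2.pr K (PowerSeries.coeff d (expOf bosonicExponent)) := by
      rw [← PowerSeries.coeff_map, ← PowerSeries.coeff_map, hmap]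
    have hdvd : (PowerSeries.X : Rt) ^ (2*K+1) ∣
        (PowerSeries.coeff d L - PowerSeries.coeff d (expOf bosonicExponent)) := by
      rw [← tVar.eq_def]  -- tVar = X?
      exact Ideal.mem_span_singleton.mp
        ((Ideal.Quotient.mk_eq_mk_iff_sub_mem _ _).mp hcd)
    have h0 := PowerSeries.X_pow_dvd_iff.mp hdvd m hm
    rw [map_sub] at h0
    linarith [h0]

end
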